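/- Let m ≥ 1, x_k = k/2^m, and y_k = φ₂(k) (base-2 radical inverse) for k = 0,...,2^m−1. Then ∑_{k=0}^{2^m−1} x_k·y_k = 2^{m−2} + m/8 − 1/2 + 1/2^{m+2}. -/

import Mathlib

/-- The base-2 digit reversal (radical inverse) function. -/
noncomputable def phi2 (k : ℕ) : ℝ :=
  ∑ i ∈ Finset.range (k + 1), if Nat.testBit k i then (1 : ℝ) / 2 ^ (i + 1) else 0

lemma phi2_ext (k n : ℕ) (h : k < n) :
    phi2 k = ∑ i ∈ Finset.range n, if Nat.testBit k i then (1 : ℝ) / 2 ^ (i + 1) else 0 := by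
  unfold phi2
  refine Finset.sum_subset (Finset.range_subset_range.2 h) ?_
  intro i _ hi
  simp only [Finset.mem_range, not_lt] at hi
  have : k < 2 ^ i := lt_of_lt_of_le (Nat.lt_two_pow_self (n := k))
    (Nat.pow_le_pow_right (by norm_num) (le_of_lt hi))
  rw [Nat.testBit_lt_two_pow this]
  simp

lemma phi2_zero : phi2 0 = 0 := by simp [phi2]

lemma phi2_aux (j b : ℕ) (hb : b < 2) :
    phi2 (2 * j + b) = (b : ℝ) / 2 + phi2 j / 2 := by
  rw [phi2_ext (2 * j + b) (2 * j + 1 + 1) (by omega), Finset.sum_range_succ',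
    phi2_ext j (2 * j + 1) (by omega), Finset.sum_div]
  have h0 : (if Nat.testBit (2 * j + b) 0 then (1 : ℝ) / 2 ^ (0 + 1) else 0) = (b : ℝ) / 2 := by
    interval_cases b <;> simp [Nat.testBit_zero, Nat.add_mul_mod_self_left, Nat.mul_add_mod]
  rw [h0, add_comm]
  congr 1
  apply Finset.sum_congr rfl
  intro i _
  have ht : Nat.testBit (2 * j + b) (i + 1) = Nat.testBit j i := by
    rw [Nat.testBit_succ]
    congr 1
    omega
  rw [ht]
  split <;> ring

lemma phi2_even (j : ℕ) : phi2 (2 * j) = phi2 j / 2 := by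
  have := phi2_aux j 0 (by norm_num); simpa using this

lemma phi2_odd (j : ℕ) : phi2 (2 * j + 1) = 1 / 2 + phi2 j / 2 := by
  have := phi2_aux j 1 (by norm_num); simpa using this

lemma sum_range_two_mul (f : ℕ → ℝ) (n : ℕ) :
    ∑ k ∈ Finset.range (2 * n), f k = ∑ j ∈ Finset.range n, (f (2 * j) + f (2 * j + 1)) := by
  induction n with
  | zero => simp
  | succ n ih =>
    have : 2 * (n + 1) = (2 * n + 1) + 1 := by ring
    rw [this, Finset.sum_range_succ, Finset.sum_range_succ, ih, Finset.sum_range_succ]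
    ring

lemma sum_range_id_real (n : ℕ) :
    ∑ j ∈ Finset.range n, (j : ℝ) = (n : ℝ) * ((n : ℝ) - 1) / 2 := by
  induction n with
  | zero => simp
  | succ n ih => rw [Finset.sum_range_succ, ih]; push_cast; ring

lemma phi2_total (m : ℕ) : ∑ j ∈ Finset.range (2 ^ m), phi2 j = 2 ^ m / 2 - 1 / 2 := by
  induction m with
  | zero => simp [phi2]
  | succ m ih =>
    rw [pow_succ, mul_comm ((2:ℕ)^m) 2, sum_range_two_mul]
    have h : ∀ j ∈ Finset.range (2 ^ m), phi2 (2 * j) + phi2 (2 * j + 1)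
        = phi2 j + 1 / 2 := by
      intro j _; rw [phi2_even, phi2_odd]; ring
    rw [Finset.sum_congr rfl h, Finset.sum_add_distrib, ih, Finset.sum_const,
      Finset.card_range, nsmul_eq_mul]
    push_cast [pow_succ]
    ring

theorem hammersley_S3 (m : ℕ) (hm : 1 ≤ m) :
    ∑ k ∈ Finset.range (2 ^ m), ((k : ℝ) / 2 ^ m) * phi2 k
      = (2:ℝ) ^ m / 4 + (m : ℝ) / 8 - 1 / 2 + 1 / 2 ^ (m + 2) := by
  induction m with
  | zero => omega
  | succ m ih =>
    rcases Nat.eq_or_lt_of_le hm with h | h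
    · have : m = 0 := by omega
      subst this
      have h1 : phi2 1 = 1 / 2 := by
        rw [show phi2 1 = phi2 (2 * 0 + 1) from rfl, phi2_odd, phi2_zero]; norm_num
      rw [show (2:ℕ)^1 = 2 from rfl, Finset.sum_range_succ, Finset.sum_range_succ,
        Finset.sum_range_zero, h1]
      norm_num
    · have hm1 : 1 ≤ m := by omega
      have ih := ih hm1
      rw [pow_succ, mul_comm ((2:ℕ)^m) 2, sum_range_two_mul]
      have key : ∀ j ∈ Finset.range (2 ^ m), ((2 * j : ℕ) : ℝ) / 2 ^ (m + 1) * phi2 (2 * j)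
          + ((2 * j + 1 : ℕ) : ℝ) / 2 ^ (m + 1) * phi2 (2 * j + 1)
          = (j : ℝ) / 2 ^ m * phi2 j + phi2 j / 2 ^ (m + 2)
            + (2 * (j : ℝ) + 1) / 2 ^ (m + 2) := by
        intro j _
        rw [phi2_even, phi2_odd]
        push_cast
        field_simp
        ring
      rw [Finset.sum_congr rfl key, Finset.sum_add_distrib, Finset.sum_add_distrib, ih,
        ← Finset.sum_div, phi2_total, ← Finset.sum_div, Finset.sum_add_distrib,
        ← Finset.mul_sum, sum_range_id_real, Finset.sum_const, Finset.card_range, nsmul_eq_mul]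
      push_cast
      field_simp
      ring
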